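/- For every real x < 0: x²/4 ≤ (−x + e^x − 1)² / (e^x − 1)² ≤ x². -/

import Mathlib

lemma key1 (x : ℝ) : Real.exp x * (1 - x) ≤ 1 := by
  have h := Real.add_one_le_exp (-x)
  have hp := Real.exp_pos x
  have := mul_le_mul_of_nonneg_left h hp.le
  rw [← Real.exp_add] at this
  simpa using (by linarith [this] : Real.exp x * (1 - x) ≤ Real.exp (x + -x))

lemma key2 (x : ℝ) (hx : x ≤ 0) : 0 ≤ 2 * Real.exp x - x * Real.exp x - x - 2 := by
  set f : ℝ → ℝ := fun y => 2 * Real.exp y - y * Real.exp y - y - 2 with hf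
  have hd : ∀ y : ℝ, HasDerivAt f (Real.exp y * (1 - y) - 1) y := by
    intro y
    have h1 : HasDerivAt (fun y : ℝ => 2 * Real.exp y) (2 * Real.exp y) y :=
      (Real.hasDerivAt_exp y).const_mul 2
    have h2 : HasDerivAt (fun y : ℝ => y * Real.exp y) (1 * Real.exp y + y * Real.exp y) y :=
      (hasDerivAt_id y).mul (Real.hasDerivAt_exp y)
    have h3 : HasDerivAt (fun y : ℝ => y) 1 y := hasDerivAt_id y
    have := ((h1.sub h2).sub h3).sub_const 2
    exact this.congr_deriv (by ring)
  have hanti : Antitone f := by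
    apply antitone_of_deriv_nonpos
    · exact fun y => (hd y).differentiableAt
    · intro y
      rw [(hd y).deriv]
      linarith [key1 y]
  have h0 : f 0 = 0 := by simp [hf]
  have := hanti hx
  rw [h0] at this
  simpa [hf] using this

theorem stmt_5 (x : ℝ) (hx : x < 0) :
    x ^ 2 / 4 ≤ (-x + Real.exp x - 1) ^ 2 / (Real.exp x - 1) ^ 2 ∧
      (-x + Real.exp x - 1) ^ 2 / (Real.exp x - 1) ^ 2 ≤ x ^ 2 := by
  have hu : Real.exp x - 1 < 0 := by
    have := Real.exp_lt_one_iff.mpr hx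
    linarith
  have hu2 : (0:ℝ) < (Real.exp x - 1) ^ 2 := by nlinarith [hu]
  have hN : 0 < -x + Real.exp x - 1 := by
    have := Real.add_one_lt_exp (ne_of_lt hx)
    linarith
  have hxu : 0 < x * (Real.exp x - 1) := mul_pos_of_neg_of_neg hx hu
  constructor
  · rw [div_le_div_iff₀ (by norm_num) hu2]
    -- need x^2 * (exp x - 1)^2 ≤ (-x + exp x - 1)^2 * 4
    have hle : x * (Real.exp x - 1) ≤ 2 * (-x + Real.exp x - 1) := by
      nlinarith [key2 x hx.le, Real.exp_pos x]
    nlinarith [hle, hxu, hN]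
  · rw [div_le_iff₀ hu2]
    have hle : -x + Real.exp x - 1 ≤ x * (Real.exp x - 1) := by
      nlinarith [key1 x]
    nlinarith [hle, hxu, hN]
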